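/- Let H be a finite-dimensional complex Hilbert space, |T⟩ ∈ H a unit vector, and M_0, …, M_{n-1} Kraus operators (∑_i M_i† M_i = I) satisfying M_i |T⟩ = z_i |T⟩ for complex numbers z_i, and such that the vectors M_0†|T⟩, …, M_{n-1}†|T⟩ span H. Then |T⟩⟨T| is the unique fixed point of the channel $(ρ) = ∑_i M_i ρ M_i† among density operators: if ρ is a density operator with $(ρ) = ρ, then ρ = |T⟩⟨T|. -/

import Mathlib

open Matrix Complex ComplexOrder


namespace KrausAux

variable {d m : ℕ}

open scoped MatrixOrder

lemma vecMulVec_mulVec' (a b x : Fin d → ℂ) :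
    vecMulVec a b *ᵥ x = (b ⬝ᵥ x) • a := by
  ext i
  simp only [mulVec, dotProduct, vecMulVec_apply, Pi.smul_apply, smul_eq_mul, Finset.sum_mul]
  exact Finset.sum_congr rfl fun j _ => by ring

lemma mul_vecMulVec' (N : Matrix (Fin d) (Fin d) ℂ) (a b : Fin d → ℂ) :
    N * vecMulVec a b = vecMulVec (N *ᵥ a) b := by
  ext i j
  simp only [Matrix.mul_apply, vecMulVec_apply, mulVec, dotProduct, Finset.sum_mul]
  exact Finset.sum_congr rfl fun k _ => by ring

lemma vecMulVec_mul' (a b : Fin d → ℂ) (N : Matrix (Fin d) (Fin d) ℂ) :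
    vecMulVec a b * N = vecMulVec a (b ᵥ* N) := by
  ext i j
  simp only [Matrix.mul_apply, vecMulVec_apply, vecMul, dotProduct, Finset.mul_sum]
  exact Finset.sum_congr rfl fun k _ => by ring

lemma conjTranspose_vecMulVec' (a b : Fin d → ℂ) :
    (vecMulVec a b)ᴴ = vecMulVec (star b) (star a) := by
  ext i j
  simp [conjTranspose_apply, vecMulVec_apply, mul_comm]

lemma smul_vecMulVec' (γ : ℂ) (a b : Fin d → ℂ) :
    vecMulVec (γ • a) b = γ • vecMulVec a b := by
  ext i j
  simp [vecMulVec_apply, mul_assoc]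

lemma trace_vecMulVec' (a b : Fin d → ℂ) :
    (vecMulVec a b).trace = b ⬝ᵥ a := by
  simp [Matrix.trace, Matrix.diag, vecMulVec_apply, dotProduct, mul_comm]

lemma sum_mulVec' {n : ℕ} (f : Fin n → Matrix (Fin d) (Fin d) ℂ) (x : Fin d → ℂ) :
    (∑ i, f i) *ᵥ x = ∑ i, f i *ᵥ x := by
  ext j
  simp only [mulVec, dotProduct, Finset.sum_apply, Matrix.sum_apply, Finset.sum_mul]
  exact Finset.sum_comm

lemma dotProduct_sum' {n : ℕ} (x : Fin d → ℂ) (f : Fin n → Fin d → ℂ) :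
    x ⬝ᵥ (∑ i, f i) = ∑ i, x ⬝ᵥ f i := by
  simp only [dotProduct, Finset.sum_apply, Finset.mul_sum]
  exact Finset.sum_comm

lemma eq_zero_of_trace_zero {X : Matrix (Fin d) (Fin d) ℂ} (hX : X.PosSemidef)
    (h : X.trace = 0) : X = 0 := by
  obtain ⟨B, rfl⟩ : ∃ B : Matrix (Fin d) (Fin d) ℂ, X = Bᴴ * B :=
    CStarAlgebra.nonneg_iff_eq_star_mul_self.mp hX.nonneg
  suffices hB : B = 0 by simp [hB]
  have ht : ∑ j, (star (fun i => B i j) ⬝ᵥ (fun i => B i j)) = 0 := by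
    rw [← h]
    simp [Matrix.trace, Matrix.diag, Matrix.mul_apply, dotProduct, conjTranspose_apply]
  have hz := (Finset.sum_eq_zero_iff_of_nonneg
    (fun j _ => dotProduct_star_self_nonneg _)).mp ht
  ext i j
  have h0 := dotProduct_star_self_eq_zero.mp (hz j (Finset.mem_univ j))
  exact congrFun h0 i

lemma mul_eq_zero_of_trace_mul_eq_zero {X Y : Matrix (Fin d) (Fin d) ℂ}
    (hX : X.PosSemidef) (hY : Y.PosSemidef) (h : (X * Y).trace = 0) : X * Y = 0 := by
  set S := CFC.sqrt X with hSdef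
  set R := CFC.sqrt Y with hRdef
  have hS : S * S = X := CFC.sqrt_mul_sqrt_self X hX.nonneg
  have hR : R * R = Y := CFC.sqrt_mul_sqrt_self Y hY.nonneg
  have hSH : Sᴴ = S := (CFC.sqrt_nonneg X).posSemidef.1
  have hRH : Rᴴ = R := (CFC.sqrt_nonneg Y).posSemidef.1
  have h1 : (Sᴴ * Y * S).trace = 0 := by
    rw [hSH, trace_mul_cycle, hS, h]
  have h2 : Sᴴ * Y * S = 0 :=
    eq_zero_of_trace_zero (hY.conjTranspose_mul_mul_same S) h1
  have h3 : (R * S)ᴴ * (R * S) = 0 := by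
    rw [conjTranspose_mul, hRH]
    calc Sᴴ * R * (R * S) = Sᴴ * (R * R) * S := by noncomm_ring
      _ = 0 := by rw [hR, h2]
  have h4 : R * S = 0 := conjTranspose_mul_self_eq_zero.mp h3
  have h5 : Y * X = 0 := by
    rw [← hR, ← hS]
    calc R * R * (S * S) = R * (R * S) * S := by noncomm_ring
      _ = 0 := by rw [h4, mul_zero, zero_mul]
  calc X * Y = (Y * X)ᴴ := by rw [conjTranspose_mul, hX.1.eq, hY.1.eq]
    _ = 0 := by rw [h5, conjTranspose_zero]

end KrausAux

/-- If the Kraus operators `M i` satisfy the completeness relation and the fixed-point condition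
with respect to a unit vector `T`, and the vectors `(M i)ᴴ *ᵥ T` span the whole space, then
`|T⟩⟨T|` is the unique fixed point of the channel `ρ ↦ ∑ i, M i * ρ * (M i)ᴴ` among density
operators. -/
theorem target_state_unique_fixed_point {d n : ℕ}
    (M : Fin n → Matrix (Fin d) (Fin d) ℂ)
    (T : Fin d → ℂ) (hT : star T ⬝ᵥ T = 1)
    (hM : ∑ i, (M i)ᴴ * M i = 1)
    (z : Fin n → ℂ) (hz : ∀ i, M i *ᵥ T = z i • T)
    (hspan : Submodule.span ℂ (Set.range fun i => (M i)ᴴ *ᵥ T) = ⊤)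
    (ρ : Matrix (Fin d) (Fin d) ℂ) (hρ : ρ.PosSemidef) (hρtr : ρ.trace = 1)
    (hfix : ∑ i, M i * ρ * (M i)ᴴ = ρ) :
    ρ = vecMulVec T (star T) := by
  classical
  open KrausAux in
  set τ : Matrix (Fin d) (Fin d) ℂ := vecMulVec T (star T) with hτdef
  set v : Fin n → Fin d → ℂ := fun i => (M i)ᴴ *ᵥ T with hvdef
  set A : Matrix (Fin d) (Fin d) ℂ := ∑ i, vecMulVec (v i) (star (v i)) with hAdef
  have hstarv : ∀ i, star (v i) = star T ᵥ* M i := by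
    intro i
    rw [hvdef]
    simp only
    rw [star_mulVec, conjTranspose_conjTranspose]
  -- A = ∑ i, (M i)ᴴ * τ * M i
  have hAeq : A = ∑ i, (M i)ᴴ * τ * M i := by
    refine Finset.sum_congr rfl fun i _ => ?_
    rw [hτdef, mul_vecMulVec', vecMulVec_mul', hstarv i]
  -- star (v i) ⬝ᵥ T = z i
  have hvdotT : ∀ i, star (v i) ⬝ᵥ T = z i := by
    intro i
    rw [hstarv i, ← dotProduct_mulVec, hz i, dotProduct_smul, hT, smul_eq_mul, mul_one]
  -- A T = T
  have hAT : A *ᵥ T = T := by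
    rw [hAdef, sum_mulVec']
    have h1 : ∀ i ∈ Finset.univ, vecMulVec (v i) (star (v i)) *ᵥ T
        = ((M i)ᴴ * M i) *ᵥ T := by
      intro i _
      rw [vecMulVec_mulVec', hvdotT i, hvdef]
      simp only
      rw [← mulVec_smul, ← hz i, mulVec_mulVec]
    rw [Finset.sum_congr rfl h1, ← sum_mulVec', hM, one_mulVec]
  -- A is Hermitian
  have hAH : Aᴴ = A := by
    rw [hAdef, conjTranspose_sum]
    refine Finset.sum_congr rfl fun i _ => ?_
    rw [conjTranspose_vecMulVec', star_star]
  -- quadratic form of A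
  have hq : ∀ x : Fin d → ℂ, star x ⬝ᵥ (A *ᵥ x)
      = ∑ i, (star (v i) ⬝ᵥ x) * star (star (v i) ⬝ᵥ x) := by
    intro x
    rw [hAdef, sum_mulVec', dotProduct_sum']
    refine Finset.sum_congr rfl fun i _ => ?_
    rw [vecMulVec_mulVec', dotProduct_smul, smul_eq_mul, star_dotProduct, star_star]
  have hApsd : A.PosSemidef := by
    refine .of_dotProduct_mulVec_nonneg hAH fun x => ?_
    rw [hq x]
    exact Finset.sum_nonneg fun i _ => mul_star_self_nonneg _
  -- A is positive definite
  have hApd : A.PosDef := by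
    refine .of_dotProduct_mulVec_pos hAH fun x hx =>
      lt_of_le_of_ne (hApsd.dotProduct_mulVec_nonneg x) fun h0 => hx ?_
    have hz0 : ∀ i ∈ Finset.univ, (star (v i) ⬝ᵥ x) * star (star (v i) ⬝ᵥ x) = 0 := by
      refine (Finset.sum_eq_zero_iff_of_nonneg
        (fun i _ => mul_star_self_nonneg _)).mp ?_
      rw [← hq x, ← h0]
    have hc : ∀ i, star (v i) ⬝ᵥ x = 0 := by
      intro i
      rcases mul_eq_zero.mp (hz0 i (Finset.mem_univ i)) with h | h
      · exact h
      · exact star_eq_zero.mp h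
    have hker : ∀ y ∈ Submodule.span ℂ (Set.range fun i => (M i)ᴴ *ᵥ T),
        star x ⬝ᵥ y = 0 := by
      intro y hy
      induction hy using Submodule.span_induction with
      | mem y hy =>
        obtain ⟨i, rfl⟩ := hy
        rw [star_dotProduct]
        show star (star (v i) ⬝ᵥ x) = 0
        rw [hc i, star_zero]
      | zero => exact dotProduct_zero _
      | add y w _ _ hy hw => rw [dotProduct_add, hy, hw, add_zero]
      | smul a y _ hy => rw [dotProduct_smul, hy, smul_zero]
    have : star x ⬝ᵥ x = 0 := hker x (by rw [hspan]; trivial)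
    exact dotProduct_star_self_eq_zero.mp this
  have hdet : IsUnit A.det := (Matrix.isUnit_iff_isUnit_det _).mp hApd.isUnit
  have hAAinv : A * A⁻¹ = 1 := Matrix.mul_nonsing_inv A hdet
  -- trace identity
  have htr : (ρ * A).trace = (ρ * τ).trace := by
    rw [hAeq, Finset.mul_sum, trace_sum]
    have h1 : ∀ i ∈ Finset.univ, (ρ * ((M i)ᴴ * τ * M i)).trace
        = ((M i * ρ * (M i)ᴴ) * τ).trace := by
      intro i _
      calc (ρ * ((M i)ᴴ * τ * M i)).trace
          = ((ρ * (M i)ᴴ) * τ * M i).trace := by rw [← mul_assoc, ← mul_assoc]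
        _ = (M i * (ρ * (M i)ᴴ) * τ).trace := by rw [trace_mul_cycle]
        _ = ((M i * ρ * (M i)ᴴ) * τ).trace := by rw [← mul_assoc]
    rw [Finset.sum_congr rfl h1, ← trace_sum, ← Finset.sum_mul, hfix]
  have htr0 : (ρ * (A - τ)).trace = 0 := by
    rw [mul_sub, trace_sub, htr, sub_self]
  -- τ is Hermitian
  have hτH : τᴴ = τ := by rw [hτdef, conjTranspose_vecMulVec', star_star]
  -- star T ᵥ* A = star T
  have hstarTA : star T ᵥ* A = star T := by
    rw [← hAH, ← star_mulVec, hAT]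
  -- B := A - τ is PSD
  have hBpsd : (A - τ).PosSemidef := by
    refine .of_dotProduct_mulVec_nonneg ?_ ?_
    · show (A - τ)ᴴ = A - τ
      rw [conjTranspose_sub, hAH, hτH]
    · intro x
      set a : ℂ := star T ⬝ᵥ x with hadef
      have hTAx : star T ⬝ᵥ (A *ᵥ x) = a := by
        rw [dotProduct_mulVec, hstarTA, hadef]
      have hxT : star x ⬝ᵥ T = star a := by
        rw [hadef, star_dotProduct]
      have key : star x ⬝ᵥ ((A - τ) *ᵥ x)
          = star (x - a • T) ⬝ᵥ (A *ᵥ (x - a • T)) := by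
        rw [star_sub, star_smul, mulVec_sub, mulVec_smul, hAT]
        rw [sub_dotProduct, dotProduct_sub, dotProduct_sub,
          smul_dotProduct, dotProduct_smul, dotProduct_smul]
        rw [hTAx, hxT]
        rw [sub_mulVec, dotProduct_sub]
        rw [hτdef, vecMulVec_mulVec', ← hadef, dotProduct_smul, hxT]
        rw [smul_dotProduct, hT]
        simp only [smul_eq_mul, mul_one]
        ring
      rw [key]
      exact hApsd.dotProduct_mulVec_nonneg _
  have hρB : ρ * (A - τ) = 0 :=
    KrausAux.mul_eq_zero_of_trace_mul_eq_zero hρ hBpsd htr0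
  have hρA : ρ * A = ρ * τ := by
    rw [mul_sub, sub_eq_zero] at hρB
    exact hρB
  have hτA : τ * A = τ := by
    rw [hτdef, vecMulVec_mul', hstarTA]
  have hτAinv : τ * A⁻¹ = τ := by
    calc τ * A⁻¹ = (τ * A) * A⁻¹ := by rw [hτA]
      _ = τ * (A * A⁻¹) := by rw [mul_assoc]
      _ = τ := by rw [hAAinv, mul_one]
  have hρτ : ρ = ρ * τ := by
    calc ρ = ρ * (A * A⁻¹) := by rw [hAAinv, mul_one]
      _ = (ρ * A) * A⁻¹ := by rw [mul_assoc]
      _ = (ρ * τ) * A⁻¹ := by rw [hρA]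
      _ = ρ * (τ * A⁻¹) := by rw [mul_assoc]
      _ = ρ * τ := by rw [hτAinv]
  set u : Fin d → ℂ := ρ *ᵥ T with hudef
  have hu : ρ = vecMulVec u (star T) := by
    rw [hρτ, hτdef, mul_vecMulVec']
  have hherm : ρ = vecMulVec T (star u) := by
    calc ρ = ρᴴ := hρ.1.symm
      _ = (vecMulVec u (star T))ᴴ := by rw [← hu]
      _ = vecMulVec T (star u) := by rw [conjTranspose_vecMulVec', star_star]
  have huT : u = (star u ⬝ᵥ T) • T := by
    calc u = ρ *ᵥ T := hudef
      _ = vecMulVec T (star u) *ᵥ T := by rw [← hherm]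
      _ = (star u ⬝ᵥ T) • T := vecMulVec_mulVec' _ _ _
  set γ : ℂ := star u ⬝ᵥ T with hγdef
  have hργ : ρ = γ • τ := by
    rw [hu, huT, smul_vecMulVec', ← hτdef]
  have hγ1 : γ = 1 := by
    have := hρtr
    rw [hργ, trace_smul, hτdef, trace_vecMulVec', hT] at this
    simpa using this
  rw [hργ, hγ1, one_smul, hτdef]
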